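/- arXiv:2206.00333 — 2 statements merged into one kernel-verified Lean document; each statement's English description precedes it below -/
import Mathlib

section
/- Let X be a shift space and N ≥ 0, and suppose E_X(v) is acyclic for all v ∈ L(X) of length < N. Then the following are equivalent: (1) E_X(v) is connected for all v ∈ L(X) with |v| < N; (2) G^L_n(X) is connected for all n ≤ N; (3) G^L_N(X) is connected. -/
def shiftMap {A : Type*} (x : ℤ → A) : ℤ → A := fun n => x (n + 1)

/-- `u` occurs as a factor of the bi-infinite word `x`. -/
def FactorOf {A : Type*} (u : List A) (x : ℤ → A) : Prop :=
  ∃ i : ℤ, ∀ k : Fin u.length, x (i + ((k : ℕ) : ℤ)) = u.get k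

/-- The language of a set of bi-infinite words. -/
def lang {A : Type*} (X : Set (ℤ → A)) : Set (List A) := {u | ∃ x ∈ X, FactorOf u x}

/-- A (nonempty) shift space: a nonempty, closed, shift-invariant subset of `A^ℤ`. -/
def IsShiftSpace {A : Type*} [TopologicalSpace A] (X : Set (ℤ → A)) : Prop :=
  X.Nonempty ∧ IsClosed X ∧ shiftMap '' X = X

/-- The extension graph of the word `v` with respect to the factorial language `L`:
the bipartite graph on the left extensions and the right extensions of `v`, with an
edge between `a` (left) and `b` (right) whenever `a v b ∈ L`. -/
def extGraph {A : Type*} (L : Set (List A)) (v : List A) :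
    SimpleGraph ({a : A // a :: v ∈ L} ⊕ {b : A // v ++ [b] ∈ L}) :=
  SimpleGraph.fromRel (fun p q =>
    match p, q with
    | Sum.inl a, Sum.inr b => (a.1 :: (v ++ [b.1])) ∈ L
    | _, _ => False)

/-- In the edge-colored multigraph determined by the cliques `{v | M ℓ v}` (one clique of
color `ℓ` for each label `ℓ`), there is an edge of color `ℓ` between `x` and `y`. -/
def MEdge {Λ V : Type*} (M : Λ → V → Prop) (ℓ : Λ) (x y : V) : Prop :=
  x ≠ y ∧ M ℓ x ∧ M ℓ y

/-- A simple cycle of length `n + 2` in the colored multigraph determined by `M`: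
pairwise distinct vertices `v i`, consecutive vertices joined by an edge of color `ℓ i`,
and the (undirected, colored) edges pairwise distinct. -/
def IsCycleM {Λ V : Type*} (M : Λ → V → Prop) (n : ℕ) (v : Fin (n + 2) → V)
    (ℓ : Fin (n + 2) → Λ) : Prop :=
  Function.Injective v ∧ (∀ i, MEdge M (ℓ i) (v i) (v (i + 1))) ∧
    ∀ i j, i ≠ j → ¬(ℓ i = ℓ j ∧ ({v i, v (i + 1)} : Set V) = {v j, v (j + 1)})

/-- The colored multigraph determined by `M` is acyclic for the coloring: every simple
cycle only uses edges of a single color. -/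
def AcyclicForColoring {Λ V : Type*} (M : Λ → V → Prop) : Prop :=
  ∀ n v ℓ, IsCycleM M n v ℓ → ∀ i j, ℓ i = ℓ j

/-- The colored multigraph determined by `M` is connected (on the whole vertex set `V`). -/
def MConnected {Λ V : Type*} (M : Λ → V → Prop) : Prop :=
  ∀ x y : V, Relation.ReflTransGen (fun p q => ∃ ℓ, MEdge M ℓ p q) x y

/-- Membership predicate describing the colored multigraph `G^L_n(X)`: the label `w`
contributes the clique `E^L_X(w)` on the vertex set `A`, for each `w` of length `n`
in the language of `X`. -/
def GLmem {A : Type*} (X : Set (ℤ → A)) (n : ℕ) (w : List A) (a : A) : Prop :=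
  w.length = n ∧ w ∈ lang X ∧ (a :: w) ∈ lang X

section helpers
open Relation
variable {A : Type*} {X : Set (ℤ → A)}

lemma lang_of_append {u t : List A} (h : u ++ t ∈ lang X) : u ∈ lang X := by
  obtain ⟨x, hx, i, h⟩ := h
  refine ⟨x, hx, i, fun k => ?_⟩
  have hk : (k : ℕ) < (u ++ t).length := by
    have := k.2; simp only [List.length_append]; omega
  have := h ⟨k, hk⟩
  simpa [List.get_eq_getElem, List.getElem_append_left, k.2] using this

lemma lang_of_cons {a : A} {u : List A} (h : a :: u ∈ lang X) : u ∈ lang X := by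
  obtain ⟨x, hx, i, h⟩ := h
  refine ⟨x, hx, i + 1, fun k => ?_⟩
  have hk : (k : ℕ) + 1 < (a :: u).length := by have := k.2; simp only [List.length_cons]; omega
  have := h ⟨(k : ℕ) + 1, hk⟩
  simp only [List.get_eq_getElem] at this ⊢
  rw [show i + 1 + ((k : ℕ) : ℤ) = i + (((k : ℕ) + 1 : ℕ) : ℤ) by push_cast; ring]
  simpa using this

lemma extend_left {u : List A} (h : u ∈ lang X) : ∃ a, a :: u ∈ lang X := by
  obtain ⟨x, hx, i, h⟩ := h
  refine ⟨x (i - 1), x, hx, i - 1, fun k => ?_⟩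
  rcases k with ⟨kv, hkv⟩
  match kv, hkv with
  | 0, _ => simp
  | (j+1), hj =>
    have hj' : j < u.length := by simpa using hj
    have := h ⟨j, hj'⟩
    simp only [List.get_eq_getElem] at this ⊢
    rw [show i - 1 + (((j+1 : ℕ)) : ℤ) = i + (j : ℕ) by push_cast; ring]
    simpa using this

lemma extend_right {u : List A} (h : u ∈ lang X) : ∃ d, u ++ [d] ∈ lang X := by
  obtain ⟨x, hx, i, h⟩ := h
  refine ⟨x (i + u.length), x, hx, i, fun k => ?_⟩
  rcases k with ⟨kv, hkv⟩
  have hkv' : kv < u.length + 1 := by simpa using hkv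
  rcases Nat.lt_or_ge kv u.length with hlt | hge
  · have := h ⟨kv, hlt⟩
    simp only [List.get_eq_getElem] at this ⊢
    rw [List.getElem_append_left hlt]
    exact this
  · have hk : kv = u.length := by omega
    subst hk
    simp only [List.get_eq_getElem]
    rw [List.getElem_append_right (le_refl _)]
    simp

lemma nil_mem_lang (hX : X.Nonempty) : ([] : List A) ∈ lang X := by
  obtain ⟨x, hx⟩ := hX
  exact ⟨x, hx, 0, fun k => k.elim0⟩


lemma master_lemma {V : Type*} {R S T : V → V → Prop} {Adj : V → Prop}
    (h1 : ∀ y y', R y y' → S y y' ∨ T y y')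
    (h2 : ∀ y y', T y y' → Adj y ∧ Adj y')
    (h4 : ∀ z y, Adj z → Adj y → ReflTransGen S z y → z = y)
    {x c : V} (hx : Adj x) (h : ReflTransGen R x c) :
    ∃ z, Adj z ∧ ReflTransGen T x z ∧ ReflTransGen S z c := by
  induction h with
  | refl => exact ⟨x, hx, ReflTransGen.refl, ReflTransGen.refl⟩
  | tail _ hbc ih =>
    obtain ⟨z, hz, htz, hsz⟩ := ih
    rcases h1 _ _ hbc with hS | hT
    · exact ⟨z, hz, htz, hsz.tail hS⟩
    · have hb := (h2 _ _ hT).1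
      have hzb : z = _ := h4 _ _ hz hb hsz
      subst hzb
      exact ⟨_, (h2 _ _ hT).2, htz.tail hT, ReflTransGen.refl⟩

lemma master_lemma' {V : Type*} {R S T : V → V → Prop} {Adj : V → Prop}
    (h1 : ∀ y y', R y y' → S y y' ∨ T y y')
    (h2 : ∀ y y', T y y' → Adj y ∧ Adj y')
    (h4 : ∀ z y, Adj z → Adj y → ReflTransGen S z y → z = y)
    {x c : V} (hx : Adj x) (hc : Adj c) (h : ReflTransGen R x c) :
    ReflTransGen T x c := by
  obtain ⟨z, hz, htz, hsz⟩ := master_lemma h1 h2 h4 hx h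
  rwa [h4 _ _ hz hc hsz] at htz

/-- In an acyclic graph, two common neighbors of `q` joined by a walk avoiding `q`
are equal. -/
lemma acyclic_common_neighbor {V : Type*} {G : SimpleGraph V} (hG : G.IsAcyclic)
    {q x c : V} (hx : G.Adj x q) (hc : G.Adj c q)
    (h : ReflTransGen (fun p r => G.Adj p r ∧ p ≠ q ∧ r ≠ q) x c) : x = c := by
  classical
  by_contra hne
  have hw : ∃ w : G.Walk x c, q ∉ w.support := by
    clear hc hne
    induction h with
    | refl => exact ⟨SimpleGraph.Walk.nil, by simp [Ne.symm hx.ne]⟩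
    | tail _ hbc ih =>
      obtain ⟨w, hwq⟩ := ih
      refine ⟨w.concat hbc.1, ?_⟩
      rw [SimpleGraph.Walk.support_concat]
      simp only [List.concat_eq_append, List.mem_append, List.mem_singleton]
      rintro (h | h)
      · exact hwq h
      · exact hbc.2.2 h.symm
  obtain ⟨w, hwq⟩ := hw
  have hp1 : q ∉ (w.toPath : G.Walk x c).support :=
    fun hmem => hwq (SimpleGraph.Walk.support_toPath_subset w hmem)
  have hp2 : (SimpleGraph.Walk.cons hx (SimpleGraph.Walk.cons hc.symm SimpleGraph.Walk.nil)).IsPath := by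
    rw [SimpleGraph.Walk.isPath_def]
    simp [List.nodup_cons, hx.ne, hne, hc.ne']
  have := hG.path_unique w.toPath ⟨_, hp2⟩
  apply hp1
  rw [this]
  simp


lemma extGraph_adj_inl_inr {L : Set (List A)} {v : List A} {a b : A}
    (ha : a :: v ∈ L) (hb : v ++ [b] ∈ L) (h : (a :: (v ++ [b])) ∈ L) :
    (extGraph L v).Adj (Sum.inl ⟨a, ha⟩) (Sum.inr ⟨b, hb⟩) := by
  refine ⟨by simp, Or.inl ?_⟩
  exact h

/-- Walking in `E(v)` between common neighbours of `e`, avoiding `e`, forces equality,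
when `E(v)` is acyclic. -/
lemma echain_eq {v : List A} {e : A} (hac : (extGraph (lang X) v).IsAcyclic)
    {x c : A} (hx : (x :: (v ++ [e])) ∈ lang X) (hc : (c :: (v ++ [e])) ∈ lang X)
    (h : ReflTransGen (fun y y' => ∃ e', e' ≠ e ∧ (y :: (v ++ [e'])) ∈ lang X ∧
      (y' :: (v ++ [e'])) ∈ lang X) x c) : x = c := by
  have he : v ++ [e] ∈ lang X := lang_of_cons hx
  have hxv : x :: v ∈ lang X := lang_of_append (t := [e]) (by simpa using hx)
  have hcv : c :: v ∈ lang X := lang_of_append (t := [e]) (by simpa using hc)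
  set q : ({a : A // a :: v ∈ lang X} ⊕ {b : A // v ++ [b] ∈ lang X}) := Sum.inr ⟨e, he⟩ with hq
  have key : ∀ {y : A}, ReflTransGen (fun y y' => ∃ e', e' ≠ e ∧ (y :: (v ++ [e'])) ∈ lang X ∧
      (y' :: (v ++ [e'])) ∈ lang X) x y → ∃ (hy : y :: v ∈ lang X),
      ReflTransGen (fun p r => (extGraph (lang X) v).Adj p r ∧ p ≠ q ∧ r ≠ q)
        (Sum.inl ⟨x, hxv⟩) (Sum.inl ⟨y, hy⟩) := by
    intro y hy
    induction hy with
    | refl => exact ⟨hxv, ReflTransGen.refl⟩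
    | tail _ hbc ih =>
      obtain ⟨hy, hchain⟩ := ih
      obtain ⟨e', he'e, m1, m2⟩ := hbc
      have hy' : _ :: v ∈ lang X := lang_of_append (t := [e']) (by simpa using m2)
      have hve' : v ++ [e'] ∈ lang X := lang_of_cons m1
      refine ⟨hy', ?_⟩
      have a1 := extGraph_adj_inl_inr (L := lang X) hy hve' m1
      have a2 := extGraph_adj_inl_inr (L := lang X) hy' hve' m2
      have hne : (Sum.inr ⟨e', hve'⟩ : {a : A // a :: v ∈ lang X} ⊕ {b : A // v ++ [b] ∈ lang X}) ≠ q := by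
        simp only [hq, ne_eq, Sum.inr.injEq, Subtype.mk.injEq]
        exact he'e
      exact (hchain.tail ⟨a1, by simp [hq], hne⟩).tail ⟨a2.symm, hne, by simp [hq]⟩
  obtain ⟨hy, hchain⟩ := key h
  have hadjx : (extGraph (lang X) v).Adj (Sum.inl ⟨x, hxv⟩) q :=
    extGraph_adj_inl_inr hxv he hx
  have hadjc : (extGraph (lang X) v).Adj (Sum.inl ⟨c, hy⟩) q :=
    extGraph_adj_inl_inr hy he hc
  have := acyclic_common_neighbor hac hadjx hadjc hchain
  simpa using this

lemma Fprime : ∀ (k : ℕ) (v : List A) (e : A), v.length = k →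
    (∀ u ∈ lang X, u.length ≤ k → (extGraph (lang X) u).IsAcyclic) →
    ∀ x c : A, (x :: (v ++ [e])) ∈ lang X → (c :: (v ++ [e])) ∈ lang X →
    ReflTransGen (fun y y' => ∃ v' e', ¬(v' = v ∧ e' = e) ∧ v'.length = k ∧
      (y :: (v' ++ [e'])) ∈ lang X ∧ (y' :: (v' ++ [e'])) ∈ lang X) x c → x = c := by
  intro k
  induction k with
  | zero =>
    intro v e hv hac x c hx hc h
    have hvnil : v = [] := List.length_eq_zero_iff.mp hv
    subst hvnil
    have hnil : ([] : List A) ∈ lang X := lang_of_cons (lang_of_cons hx)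
    refine echain_eq (hac [] hnil (by simp)) hx hc (ReflTransGen.mono ?_ _ _ h)
    rintro y y' ⟨v', e', hne, hlen, m1, m2⟩
    have : v' = [] := List.length_eq_zero_iff.mp hlen
    subst this
    exact ⟨e', fun hee => hne ⟨rfl, hee⟩, m1, m2⟩
  | succ k ih =>
    intro v e hv hac x c hx hc h
    obtain ⟨u, f, huf⟩ : ∃ u f, v = u ++ [f] := by
      rcases List.eq_nil_or_concat v with h' | ⟨u, f, h'⟩
      · simp [h'] at hv
      · exact ⟨u, f, by simpa using h'⟩
    subst huf
    have hulen : u.length = k := by simpa using hv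
    have hxv : x :: (u ++ [f]) ∈ lang X := lang_of_append (t := [e]) (by simpa using hx)
    have hcv : c :: (u ++ [f]) ∈ lang X := lang_of_append (t := [e]) (by simpa using hc)
    have hvmem : u ++ [f] ∈ lang X := lang_of_cons hxv
    have hT := master_lemma'
      (R := fun y y' => ∃ v' e', ¬(v' = u ++ [f] ∧ e' = e) ∧ v'.length = k + 1 ∧
        (y :: (v' ++ [e'])) ∈ lang X ∧ (y' :: (v' ++ [e'])) ∈ lang X)
      (S := fun y y' => ∃ v' e', ¬(v' = u ∧ e' = f) ∧ v'.length = k ∧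
        (y :: (v' ++ [e'])) ∈ lang X ∧ (y' :: (v' ++ [e'])) ∈ lang X)
      (T := fun y y' => ∃ e', e' ≠ e ∧ (y :: ((u ++ [f]) ++ [e'])) ∈ lang X ∧
        (y' :: ((u ++ [f]) ++ [e'])) ∈ lang X)
      (Adj := fun y => y :: (u ++ [f]) ∈ lang X)
      ?_ ?_ ?_ hxv hcv h
    · exact echain_eq (hac (u ++ [f]) hvmem (by simp [hulen])) hx hc hT
    · rintro y y' ⟨v', e', hne, hlen, m1, m2⟩
      by_cases hvv : v' = u ++ [f]
      · subst hvv
        exact Or.inr ⟨e', fun hee => hne ⟨rfl, hee⟩, m1, m2⟩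
      · obtain ⟨u', f', huf'⟩ : ∃ u' f', v' = u' ++ [f'] := by
          rcases List.eq_nil_or_concat v' with h' | ⟨u', f', h'⟩
          · simp [h'] at hlen
          · exact ⟨u', f', by simpa using h'⟩
        subst huf'
        refine Or.inl ⟨u', f', ?_, by simpa using hlen, ?_, ?_⟩
        · rintro ⟨rfl, rfl⟩; exact hvv rfl
        · exact lang_of_append (t := [e']) (by simpa using m1)
        · exact lang_of_append (t := [e']) (by simpa using m2)
    · rintro y y' ⟨e', _, m1, m2⟩
      exact ⟨lang_of_append (t := [e']) (by simpa using m1),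
             lang_of_append (t := [e']) (by simpa using m2)⟩
    · intro z y hz hy hzy
      exact ih u f hulen (fun u' hu' hlen' => hac u' hu' (by omega)) z y
        (by simpa using hz) (by simpa using hy)
        hzy


/-- A chain of `H_w`-steps gives reachability between left vertices of `E(w)`. -/
lemma tchain_reach {w : List A} {a : A} (ha : a :: w ∈ lang X) {b : A}
    (h : ReflTransGen (fun y y' => ∃ d, (y :: (w ++ [d])) ∈ lang X ∧
      (y' :: (w ++ [d])) ∈ lang X) a b) :
    ∃ hb : b :: w ∈ lang X,
      (extGraph (lang X) w).Reachable (Sum.inl ⟨a, ha⟩) (Sum.inl ⟨b, hb⟩) := by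
  induction h with
  | refl => exact ⟨ha, SimpleGraph.Reachable.refl _⟩
  | tail _ hbc ih =>
    obtain ⟨hy, hr⟩ := ih
    obtain ⟨d, m1, m2⟩ := hbc
    have hy' : _ :: w ∈ lang X := lang_of_append (t := [d]) (by simpa using m2)
    have hwd : w ++ [d] ∈ lang X := lang_of_cons m1
    refine ⟨hy', hr.trans ?_⟩
    exact ((extGraph_adj_inl_inr hy hwd m1).reachable).trans
      ((extGraph_adj_inl_inr hy' hwd m2).symm.reachable)

lemma list_eq_concat_two {ℓ : List A} (h : 2 ≤ ℓ.length) :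
    ∃ v e d, ℓ = v ++ [e] ++ [d] := by
  rcases List.eq_nil_or_concat ℓ with h' | ⟨t, d, h'⟩
  · simp [h'] at h
  · subst h'
    rcases List.eq_nil_or_concat t with h' | ⟨v, e, h'⟩
    · simp [h'] at h
    · exact ⟨v, e, d, by simp [h']⟩

lemma left_reach {w : List A}
    (hac : ∀ u ∈ lang X, u.length ≤ w.length → (extGraph (lang X) u).IsAcyclic)
    (hconn : MConnected (GLmem X (w.length + 1)))
    {a b : A} (ha : a :: w ∈ lang X) (hb : b :: w ∈ lang X) :
    (extGraph (lang X) w).Reachable (Sum.inl ⟨a, ha⟩) (Sum.inl ⟨b, hb⟩) := by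
  have hT : ReflTransGen (fun y y' => ∃ d, (y :: (w ++ [d])) ∈ lang X ∧
      (y' :: (w ++ [d])) ∈ lang X) a b := by
    rcases List.eq_nil_or_concat w with hnil | ⟨v, e, hve⟩
    · subst hnil
      refine ReflTransGen.mono ?_ _ _ (hconn a b)
      rintro y y' ⟨ℓ, hne, ⟨hlen, hℓ, hyℓ⟩, ⟨-, -, hy'ℓ⟩⟩
      obtain ⟨d, rfl⟩ := List.length_eq_one_iff.mp (by simpa using hlen)
      exact ⟨d, by simpa using hyℓ, by simpa using hy'ℓ⟩
    · rw [List.concat_eq_append] at hve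
      subst hve
      refine master_lemma'
        (S := fun y y' => ∃ v' e', ¬(v' = v ∧ e' = e) ∧ v'.length = v.length ∧
          (y :: (v' ++ [e'])) ∈ lang X ∧ (y' :: (v' ++ [e'])) ∈ lang X)
        (Adj := fun y => y :: (v ++ [e]) ∈ lang X)
        ?_ ?_ ?_ ha hb (hconn a b)
      · rintro y y' ⟨ℓ, hne, ⟨hlen, hℓ, hyℓ⟩, ⟨-, -, hy'ℓ⟩⟩
        obtain ⟨v', e', d', rfl⟩ := list_eq_concat_two (ℓ := ℓ)
          (by simp at hlen ⊢; omega)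
        have hlen' : v'.length = v.length := by simp at hlen ⊢; omega
        by_cases hvv : v' = v ∧ e' = e
        · obtain ⟨rfl, rfl⟩ := hvv
          exact Or.inr ⟨d', by simpa [List.append_assoc] using hyℓ,
            by simpa [List.append_assoc] using hy'ℓ⟩
        · refine Or.inl ⟨v', e', hvv, hlen', ?_, ?_⟩
          · exact lang_of_append (t := [d']) (by simpa using hyℓ)
          · exact lang_of_append (t := [d']) (by simpa using hy'ℓ)
      · rintro y y' ⟨d, m1, m2⟩
        exact ⟨lang_of_append (t := [d]) (by simpa using m1),
               lang_of_append (t := [d]) (by simpa using m2)⟩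
      · intro z y hz hy hzy
        exact Fprime v.length v e rfl
          (fun u hu hlen => hac u hu (by simp; omega)) z y hz hy hzy
  obtain ⟨hb', hr⟩ := tchain_reach ha hT
  convert hr using 2


/-- (2) → (1) : connectivity of the extension graphs from connectivity of the `G_n`. -/
lemma ext_connected {w : List A} (hw : w ∈ lang X)
    (hac : ∀ u ∈ lang X, u.length ≤ w.length → (extGraph (lang X) u).IsAcyclic)
    (hconn : MConnected (GLmem X (w.length + 1))) :
    (extGraph (lang X) w).Connected := by
  have hreach : ∀ z : ({a : A // a :: w ∈ lang X} ⊕ {b : A // w ++ [b] ∈ lang X}),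
      ∃ (a : A) (ha : a :: w ∈ lang X),
        (extGraph (lang X) w).Reachable (Sum.inl ⟨a, ha⟩) z := by
    rintro (⟨a, ha⟩ | ⟨b, hb⟩)
    · exact ⟨a, ha, SimpleGraph.Reachable.refl _⟩
    · obtain ⟨a, haw⟩ := extend_left hb
      have ha : a :: w ∈ lang X := lang_of_append (t := [b]) (by simpa using haw)
      exact ⟨a, ha, (extGraph_adj_inl_inr ha hb haw).reachable⟩
  obtain ⟨a0, ha0⟩ := extend_left hw
  haveI : Nonempty ({a : A // a :: w ∈ lang X} ⊕ {b : A // w ++ [b] ∈ lang X}) :=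
    ⟨Sum.inl ⟨a0, ha0⟩⟩
  refine ⟨fun z z' => ?_⟩
  obtain ⟨a, ha, hra⟩ := hreach z
  obtain ⟨b, hb, hrb⟩ := hreach z'
  exact (hra.symm.trans (left_reach hac hconn ha hb)).trans hrb

/-- (1) → (2), inductive step packaged: -/
lemma gl_connected (hX : X.Nonempty) (hover : ∀ a : A, [a] ∈ lang X) :
    ∀ n : ℕ, (∀ v ∈ lang X, v.length < n → (extGraph (lang X) v).Connected) →
    MConnected (GLmem X n) := by
  intro n
  induction n with
  | zero =>
    intro _ a b
    rcases eq_or_ne a b with rfl | hne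
    · exact ReflTransGen.refl
    · exact ReflTransGen.single ⟨[], hne, ⟨rfl, nil_mem_lang hX, hover a⟩,
        ⟨rfl, nil_mem_lang hX, hover b⟩⟩
  | succ n ih =>
    intro hc a b
    have hstep : ∀ y y', (∃ ℓ, MEdge (GLmem X n) ℓ y y') →
        ReflTransGen (fun p q => ∃ ℓ, MEdge (GLmem X (n + 1)) ℓ p q) y y' := by
      rintro y y' ⟨w, hne, ⟨hlen, hwL, hyw⟩, ⟨-, -, hy'w⟩⟩
      have hcw : (extGraph (lang X) w).Connected := hc w hwL (by omega)
      have hr : (extGraph (lang X) w).Reachable (Sum.inl ⟨y, hyw⟩) (Sum.inl ⟨y', hy'w⟩) :=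
        hcw.preconnected _ _
      rw [SimpleGraph.reachable_iff_reflTransGen] at hr
      -- transfer along the walk
      have key : ∀ (z : ({a : A // a :: w ∈ lang X} ⊕ {b : A // w ++ [b] ∈ lang X})),
          ReflTransGen (extGraph (lang X) w).Adj (Sum.inl ⟨y, hyw⟩) z →
          (∀ c (hc' : c :: w ∈ lang X), z = Sum.inl ⟨c, hc'⟩ →
            ReflTransGen (fun p q => ∃ ℓ, MEdge (GLmem X (n + 1)) ℓ p q) y c) ∧
          (∀ d (hd : w ++ [d] ∈ lang X), z = Sum.inr ⟨d, hd⟩ →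
            ∃ c, ReflTransGen (fun p q => ∃ ℓ, MEdge (GLmem X (n + 1)) ℓ p q) y c ∧
              (c :: (w ++ [d])) ∈ lang X) := by
        intro z hz
        induction hz with
        | refl =>
          constructor
          · rintro c hc' hz
            have : y = c := by simpa [Subtype.ext_iff] using hz
            subst this
            exact ReflTransGen.refl
          · rintro d hd hz
            exact absurd hz (by simp)
        | @tail zmid z hzz hadj ih2 =>
          obtain ⟨ihl, ihr⟩ := ih2
          constructor
          · rintro c hc' rfl
            obtain ⟨hne', hrel⟩ := hadj
            rcases zmid with ⟨c', hc''⟩ | ⟨d, hd⟩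
            · rcases hrel with h | h <;> exact h.elim
            · obtain ⟨c', hchain, hc'd⟩ := ihr d hd rfl
              have hcd : (c :: (w ++ [d])) ∈ lang X := by
                rcases hrel with h | h
                · exact h.elim
                · exact h
              rcases eq_or_ne c' c with rfl | hnecc
              · exact hchain
              · refine hchain.tail ⟨w ++ [d], hnecc, ?_, ?_⟩
                · exact ⟨by simpa using hlen, lang_of_cons hc'd, hc'd⟩
                · exact ⟨by simpa using hlen, lang_of_cons hcd, hcd⟩
          · rintro d hd rfl
            obtain ⟨hne', hrel⟩ := hadj
            rcases zmid with ⟨c, hcL⟩ | ⟨d', hd'⟩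
            · have hcd : (c :: (w ++ [d])) ∈ lang X := by
                rcases hrel with h | h
                · exact h
                · exact h.elim
              exact ⟨c, ihl c hcL rfl, hcd⟩
            · rcases hrel with h | h <;> exact h.elim
      exact (key _ hr).1 y' hy'w rfl
    have hchain := ih (fun v hv hl => hc v hv (by omega)) a b
    induction hchain with
    | refl => exact ReflTransGen.refl
    | tail _ hbc ih3 => exact ih3.trans (hstep _ _ hbc)

lemma gl_desc {n : ℕ} (h : MConnected (GLmem X (n + 1))) : MConnected (GLmem X n) := by
  intro a b
  refine ReflTransGen.mono ?_ _ _ (h a b)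
  rintro y y' ⟨ℓ, hne, ⟨hlen, hℓ, hyℓ⟩, ⟨-, -, hy'ℓ⟩⟩
  obtain ⟨t, d, rfl⟩ : ∃ t d, ℓ = t ++ [d] := by
    rcases List.eq_nil_or_concat ℓ with h' | ⟨t, d, h'⟩
    · simp [h'] at hlen
    · exact ⟨t, d, by simpa using h'⟩
  refine ⟨t, hne, ⟨by simpa using hlen, lang_of_append hℓ, ?_⟩,
    ⟨by simpa using hlen, lang_of_append hℓ, ?_⟩⟩
  · exact lang_of_append (t := [d]) (by simpa using hyℓ)
  · exact lang_of_append (t := [d]) (by simpa using hy'ℓ)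

lemma gl_down : ∀ (j n : ℕ), MConnected (GLmem X (n + j)) → MConnected (GLmem X n) := by
  intro j
  induction j with
  | zero => intro n h; exact h
  | succ j ih =>
    intro n h
    exact gl_desc (ih (n + 1) (by rw [show n + 1 + j = n + (j + 1) by omega]; exact h))

end helpers

/-- If the extension graph `E_X(v)` is acyclic for every factor `v` of length `< N`,
then the following are equivalent: (1) `E_X(v)` is connected for every `v ∈ L(X)` with
`|v| < N`; (2) `G^L_n(X)` is connected for every `n ≤ N`; (3) `G^L_N(X)` is connected. -/
theorem stmt_13 {A : Type*} [TopologicalSpace A] [DiscreteTopology A]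
    (X : Set (ℤ → A)) (hX : IsShiftSpace X) (hover : ∀ a : A, [a] ∈ lang X) (N : ℕ)
    (hacyc : ∀ v ∈ lang X, v.length < N → (extGraph (lang X) v).IsAcyclic) :
    ((∀ v ∈ lang X, v.length < N → (extGraph (lang X) v).Connected)
        ↔ ∀ n ≤ N, MConnected (GLmem X n))
      ∧ ((∀ n ≤ N, MConnected (GLmem X n)) ↔ MConnected (GLmem X N)) := by
  obtain ⟨hnonempty, -, -⟩ := hX
  constructor
  · constructor
    · intro h1 n hn
      exact gl_connected hnonempty hover n (fun v hv hl => h1 v hv (lt_of_lt_of_le hl hn))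
    · intro h2 v hv hl
      exact ext_connected hv (fun u hu hlen => hacyc u hu (by omega))
        (h2 (v.length + 1) (by omega))
  · constructor
    · intro h2
      exact h2 N le_rfl
    · intro h3 n hn
      refine gl_down (N - n) n ?_
      rw [show n + (N - n) = N by omega]
      exact h3
end

section
/- Let X be a minimal dendric shift over A that is planar for total orders (≤^L, ≤^R). Then for every two letters a, b consecutive for ≤^L and for every n ∈ ℕ, there is a unique left special factor w of length n such that {a, b} ⊆ E^L_X(w). -/
/-- A minimal shift space: a shift space whose only closed shift-invariant subsets
are `∅` and itself. -/
def IsMinimal {A : Type*} [TopologicalSpace A] (X : Set (ℤ → A)) : Prop :=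
  IsShiftSpace X ∧ ∀ Y : Set (ℤ → A), Y ⊆ X → IsClosed Y → shiftMap '' Y = Y → Y = ∅ ∨ Y = X

/-- The word `v` is planar for the pair of orders `(rL, rR)` with respect to the
language `L`: for all bi-extensions `(a₁, b₁)` and `(a₂, b₂)` of `v`, if `a₁ <L a₂`
then `b₁ ≤R b₂`. -/
def PlanarWord {A : Type*} (L : Set (List A)) (rL rR : A → A → Prop)
    (v : List A) : Prop :=
  ∀ a₁ b₁ a₂ b₂ : A, (a₁ :: (v ++ [b₁])) ∈ L → (a₂ :: (v ++ [b₂])) ∈ L →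
    rL a₁ a₂ → a₁ ≠ a₂ → rR b₁ b₂

/-- `a` and `b` are consecutive for the (total) order `r`. -/
def Consecutive {A : Type*} (r : A → A → Prop) (a b : A) : Prop :=
  r a b ∧ a ≠ b ∧ ∀ c : A, r a c → r c b → c = a ∨ c = b

lemma factorOf_tail {A : Type*} {a : A} {u : List A} {x : ℤ → A}
    (h : FactorOf (a :: u) x) : FactorOf u x := by
  obtain ⟨i, hi⟩ := h
  refine ⟨i + 1, fun k => ?_⟩
  have h2 := hi ⟨k.1 + 1, by simpa using Nat.succ_lt_succ k.2⟩
  have e : i + 1 + ((k.1 : ℕ) : ℤ) = i + (((k.1 + 1 : ℕ)) : ℤ) := by push_cast; ring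
  rw [e]
  simp [List.get_eq_getElem] at h2 ⊢
  exact h2

lemma factorOf_dropLast {A : Type*} {c : A} {u : List A} {x : ℤ → A}
    (h : FactorOf (u ++ [c]) x) : FactorOf u x := by
  obtain ⟨i, hi⟩ := h
  refine ⟨i, fun k => ?_⟩
  have h2 := hi ⟨k.1, by simp [Nat.lt_succ_of_lt k.2]⟩
  simpa [List.get_eq_getElem, List.getElem_append_left k.2] using h2

lemma lang_tail {A : Type*} {X : Set (ℤ → A)} {a : A} {u : List A}
    (h : a :: u ∈ lang X) : u ∈ lang X := by
  obtain ⟨x, hx, hf⟩ := h; exact ⟨x, hx, factorOf_tail hf⟩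

lemma lang_dropLast {A : Type*} {X : Set (ℤ → A)} {c : A} {u : List A}
    (h : u ++ [c] ∈ lang X) : u ∈ lang X := by
  obtain ⟨x, hx, hf⟩ := h; exact ⟨x, hx, factorOf_dropLast hf⟩

lemma lang_extend_right {A : Type*} {X : Set (ℤ → A)} {u : List A}
    (h : u ∈ lang X) : ∃ c : A, u ++ [c] ∈ lang X := by
  obtain ⟨x, hx, i, hi⟩ := h
  refine ⟨x (i + (u.length : ℤ)), x, hx, i, fun k => ?_⟩
  have hk : k.1 < u.length + 1 := by simpa using k.2
  rcases Nat.lt_or_ge k.1 u.length with hlt | hge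
  · have h2 := hi ⟨k.1, hlt⟩
    simpa [List.get_eq_getElem, List.getElem_append_left hlt] using h2
  · have hk' : k.1 = u.length := le_antisymm (by omega) hge
    simp [List.get_eq_getElem, hk', List.getElem_concat_length]

lemma lang_nil {A : Type*} {X : Set (ℤ → A)} (hne : X.Nonempty) : ([] : List A) ∈ lang X := by
  obtain ⟨x, hx⟩ := hne
  exact ⟨x, hx, 0, fun k => absurd k.2 (by simp)⟩

lemma exists_rel_max {A : Type*} {r : A → A → Prop}
    (htot : ∀ x y : A, r x y ∨ r y x) (htrans : ∀ x y z : A, r x y → r y z → r x z)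
    (s : Finset A) (hs : s.Nonempty) : ∃ m ∈ s, ∀ x ∈ s, r x m := by
  classical
  induction s using Finset.cons_induction with
  | empty => exact absurd hs (by simp)
  | cons a s ha ih =>
    rcases s.eq_empty_or_nonempty with rfl | hsne
    · refine ⟨a, by simp, fun x hx => ?_⟩
      have hxa : x = a := by
        simpa using hx
      subst hxa
      rcases htot x x with h | h <;> exact h
    · obtain ⟨m, hm, hmax⟩ := ih hsne
      rcases htot a m with h | h
      · refine ⟨m, Finset.mem_cons.mpr (Or.inr hm), fun x hx => ?_⟩
        rcases Finset.mem_cons.mp hx with rfl | hx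
        · exact h
        · exact hmax x hx
      · refine ⟨a, Finset.mem_cons_self _ _, fun x hx => ?_⟩
        rcases Finset.mem_cons.mp hx with rfl | hx
        · rcases htot x x with h' | h' <;> exact h'
        · exact htrans x m a (hmax x hx) h

lemma reachable_iff_of_adj_iff {V : Type*} {G : SimpleGraph V} {P : V → Prop}
    (h : ∀ x y, G.Adj x y → (P x ↔ P y)) {u v : V} (hr : G.Reachable u v) : P u ↔ P v := by
  obtain ⟨p⟩ := hr
  induction p with
  | nil => exact Iff.rfl
  | cons hadj _ ih => exact (h _ _ hadj).trans ih

lemma key_ext {A : Type*} [Fintype A] {rL rR : A → A → Prop}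
    (hrL : IsLinearOrder A rL) (hrR : IsLinearOrder A rR)
    {X : Set (ℤ → A)}
    (hdendric : ∀ v ∈ lang X, (extGraph (lang X) v).IsTree)
    (hplanar : ∀ v ∈ lang X, PlanarWord (lang X) rL rR v)
    {a b : A} (hcons : Consecutive rL a b)
    {w : List A} (ha : a :: w ∈ lang X) (hb : b :: w ∈ lang X) :
    ∃ c : A, a :: (w ++ [c]) ∈ lang X ∧ b :: (w ++ [c]) ∈ lang X := by
  classical
  by_contra hno
  push_neg at hno
  have hw : w ∈ lang X := lang_tail ha
  have hplw := hplanar w hw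
  have rRanti : ∀ {x y : A}, rR x y → rR y x → x = y :=
    fun h1 h2 => hrR.toIsPartialOrder.toAntisymm.antisymm _ _ h1 h2
  have rRtrans : ∀ {x y z : A}, rR x y → rR y z → rR x z :=
    fun h1 h2 => hrR.toIsPartialOrder.toIsPreorder.toIsTrans.trans _ _ _ h1 h2
  have rLrefl : ∀ x : A, rL x x := hrL.toIsPartialOrder.toIsPreorder.toRefl.refl
  -- the maximal right extension of a·w
  set S : Finset A := Finset.univ.filter (fun c => a :: (w ++ [c]) ∈ lang X) with hS
  have hSne : S.Nonempty := by
    obtain ⟨c, hc⟩ := lang_extend_right ha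
    exact ⟨c, Finset.mem_filter.mpr ⟨Finset.mem_univ _, by simpa using hc⟩⟩
  obtain ⟨m, hmS', hmax'⟩ := exists_rel_max hrR.toTotal.total
    (fun x y z h1 h2 => rRtrans h1 h2) S hSne
  have hmS : a :: (w ++ [m]) ∈ lang X := (Finset.mem_filter.mp hmS').2
  have hmax : ∀ c : A, a :: (w ++ [c]) ∈ lang X → rR c m := fun c hc =>
    hmax' c (Finset.mem_filter.mpr ⟨Finset.mem_univ _, hc⟩)
  -- the key bipartite invariant
  have hmain : ∀ (a' : {a' : A // a' :: w ∈ lang X}) (d : {d : A // w ++ [d] ∈ lang X}),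
      a'.1 :: (w ++ [d.1]) ∈ lang X → (rL a'.1 a ↔ rR d.1 m) := by
    intro a' d hed
    constructor
    · intro hla
      by_cases heq : a'.1 = a
      · exact hmax d.1 (heq ▸ hed)
      · exact hplw a'.1 d.1 a m hed hmS hla heq
    · intro hrd
      by_contra hnla
      have h1 : rL a a'.1 := (hrL.toTotal.total a a'.1).resolve_right hnla
      by_cases hab : a'.1 = b
      · have hedb : b :: (w ++ [d.1]) ∈ lang X := hab ▸ hed
        have h2 : rR m d.1 := hplw a m b d.1 hmS hedb hcons.1 hcons.2.1
        have hdm : d.1 = m := rRanti hrd h2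
        exact hno m hmS (hdm ▸ hedb)
      · have hba : rL b a'.1 := by
          rcases hrL.toTotal.total a'.1 b with h | h
          · rcases hcons.2.2 a'.1 h1 h with h' | h'
            · exact absurd (h' ▸ rLrefl a'.1) hnla
            · exact absurd h' hab
          · exact h
        obtain ⟨t, ht⟩ := lang_extend_right hb
        have ht' : b :: (w ++ [t]) ∈ lang X := by simpa using ht
        have h3 : rR t d.1 := hplw b t a'.1 d.1 ht' hed hba (fun h => hab h.symm)
        have h4 : rR m t := hplw a m b t hmS ht' hcons.1 hcons.2.1
        have hdm : d.1 = m := rRanti hrd (rRtrans h4 h3)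
        have htm : t = m := rRanti (hdm ▸ h3) h4
        exact hno m hmS (htm ▸ ht')
  -- transfer along the connected extension graph
  set P : ({a' : A // a' :: w ∈ lang X} ⊕ {d : A // w ++ [d] ∈ lang X}) → Prop :=
    Sum.elim (fun a' => rL a'.1 a) (fun d => rR d.1 m) with hP
  have hadj : ∀ x y, (extGraph (lang X) w).Adj x y → (P x ↔ P y) := by
    intro x y hxy
    rw [extGraph, SimpleGraph.fromRel_adj] at hxy
    obtain ⟨hne, hrel⟩ := hxy
    cases x with
    | inl a' =>
      cases y with
      | inl a'' => exact absurd hrel (by simp)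
      | inr d =>
        have hed : a'.1 :: (w ++ [d.1]) ∈ lang X := by
          rcases hrel with h | h
          · exact h
          · exact h.elim
        exact hmain a' d hed
    | inr d =>
      cases y with
      | inr d' => exact absurd hrel (by simp)
      | inl a' =>
        have hed : a'.1 :: (w ++ [d.1]) ∈ lang X := by
          rcases hrel with h | h
          · exact h.elim
          · exact h
        exact (hmain a' d hed).symm
  have hreach := (hdendric w hw).isConnected.preconnected
    (Sum.inl ⟨a, ha⟩) (Sum.inl ⟨b, hb⟩)
  have hiff := reachable_iff_of_adj_iff hadj hreach
  have hba : rL b a := hiff.mp (rLrefl a)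
  exact hcons.2.1 (hrL.toIsPartialOrder.toAntisymm.antisymm _ _ hcons.1 hba)

/-- Let `X` be a minimal dendric shift over `A` that is planar for `(≤L, ≤R)`. Then for
any two letters `a, b` consecutive for `≤L` and every `n`, there is a unique left
special factor `w` of length `n` with `{a, b} ⊆ E^L_X(w)`. -/
theorem stmt_16 {A : Type*} [Fintype A] [TopologicalSpace A] [DiscreteTopology A]
    (rL rR : A → A → Prop) (hrL : IsLinearOrder A rL) (hrR : IsLinearOrder A rR)
    (X : Set (ℤ → A)) (hmin : IsMinimal X) (hover : ∀ a : A, [a] ∈ lang X)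
    (hdendric : ∀ v ∈ lang X, (extGraph (lang X) v).IsTree)
    (hplanar : ∀ v ∈ lang X, PlanarWord (lang X) rL rR v) :
    ∀ a b : A, Consecutive rL a b → ∀ n : ℕ,
      ∃! w : List A, w ∈ lang X ∧ w.length = n ∧ a :: w ∈ lang X ∧ b :: w ∈ lang X := by
  intro a b hcons n
  induction n with
  | zero =>
    refine ⟨[], ⟨lang_nil hmin.1.1, rfl, hover a, hover b⟩, ?_⟩
    rintro w ⟨_, hlen, _⟩
    exact List.length_eq_zero_iff.mp hlen
  | succ n ih =>
    obtain ⟨u, ⟨hu, hulen, hau, hbu⟩, huniq⟩ := ih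
    obtain ⟨c, hac, hbc⟩ := key_ext hrL hrR hdendric hplanar hcons hau hbu
    refine ⟨u ++ [c], ⟨lang_tail hac, by simp [hulen], hac, hbc⟩, ?_⟩
    rintro w' ⟨hw', hlen', haw', hbw'⟩
    rcases List.eq_nil_or_concat w' with rfl | ⟨u', c', rfl⟩
    · simp at hlen'
    · rw [List.concat_eq_append] at hw' hlen' haw' hbw'
      have hau'' : (a :: u') ++ [c'] ∈ lang X := by simpa using haw'
      have hbu'' : (b :: u') ++ [c'] ∈ lang X := by simpa using hbw'
      have hau' : a :: u' ∈ lang X := lang_dropLast hau''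
      have hbu' : b :: u' ∈ lang X := lang_dropLast hbu''
      have hu' : u' ∈ lang X := lang_tail hau'
      have hulen' : u'.length = n := by simpa using hlen'
      have heq : u' = u := huniq u' ⟨hu', hulen', hau', hbu'⟩
      subst heq
      have h1 : rR c' c := hplanar u' hu' a c' b c haw' hbc hcons.1 hcons.2.1
      have h2 : rR c c' := hplanar u' hu' a c b c' hac hbw' hcons.1 hcons.2.1
      have : c' = c := hrR.toIsPartialOrder.toAntisymm.antisymm _ _ h1 h2
      rw [List.concat_eq_append, this]
end
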